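/- Let d ≥ 2 be an integer, let α ≥ 0 and K be real numbers with 2 + αK ≠ 0, and let I ⊆ ℝ be an open interval. Suppose f : I → ℝ is differentiable, f(λ) > 0 and 2·f(λ) + αK ≠ 0 for all λ ∈ I, and f satisfies the implicit relation f(λ) = 1 − 2K(d−1)λ + (αK/2)·log|(2·f(λ) + αK)/(2 + αK)| for all λ ∈ I. Then for every λ ∈ I the derivative of f satisfies f′(λ) = −2(d−1)K − α(d−1)K²/f(λ). -/

import Mathlib

/-- The implicitly defined conformal factor of the RG-2 flow constant-curvature
solution, `f(λ) = 1 − 2K(d−1)λ + (αK/2)·log|(2f(λ) + αK)/(2 + αK)|`, solves the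
ODE `f′ = −2(d−1)K − α(d−1)K²/f`. -/
theorem rg2_constant_curvature_ode
    (d : ℕ) (hd : 2 ≤ d) (α K : ℝ) (hα : 0 ≤ α) (hαK : 2 + α * K ≠ 0)
    (a b : ℝ) (f : ℝ → ℝ)
    (hdiff : ∀ x ∈ Set.Ioo a b, DifferentiableAt ℝ f x)
    (hpos : ∀ x ∈ Set.Ioo a b, 0 < f x)
    (hne : ∀ x ∈ Set.Ioo a b, 2 * f x + α * K ≠ 0)
    (hrel : ∀ x ∈ Set.Ioo a b,
      f x = 1 - 2 * K * ((d : ℝ) - 1) * x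
        + (α * K / 2) * Real.log (|(2 * f x + α * K) / (2 + α * K)|)) :
    ∀ x ∈ Set.Ioo a b,
      deriv f x = -2 * ((d : ℝ) - 1) * K - α * ((d : ℝ) - 1) * K ^ 2 / f x := by
  intro x hx
  set g : ℝ → ℝ := fun y => 1 - 2 * K * ((d : ℝ) - 1) * y
      + (α * K / 2) * (Real.log (2 * f y + α * K) - Real.log (2 + α * K)) with hg
  have hfg : ∀ y ∈ Set.Ioo a b, f y = g y := by
    intro y hy
    have := hrel y hy
    rw [Real.log_abs, Real.log_div (hne y hy) hαK] at this
    simpa [hg] using this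
  have hmem : Set.Ioo a b ∈ nhds x := isOpen_Ioo.mem_nhds hx
  have hEq : f =ᶠ[nhds x] g := Filter.eventually_of_mem hmem hfg
  obtain ⟨D, hf'⟩ : ∃ D, HasDerivAt f D x := ⟨_, (hdiff x hx).hasDerivAt⟩
  have hinner : HasDerivAt (fun y => 2 * f y + α * K) (2 * D) x :=
    (hf'.const_mul 2).add_const _
  have hlog : HasDerivAt (fun y => Real.log (2 * f y + α * K))
      ((2 * f x + α * K)⁻¹ * (2 * D)) x := by
    have := (Real.hasDerivAt_log (hne x hx)).comp x hinner
    exact this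
  have hlin : HasDerivAt (fun y => 1 - 2 * K * ((d : ℝ) - 1) * y)
      (-(2 * K * ((d : ℝ) - 1))) x := by
    simpa using ((hasDerivAt_id x).const_mul (2 * K * ((d : ℝ) - 1))).const_sub 1
  have hg' : HasDerivAt g
      (-(2 * K * ((d : ℝ) - 1)) + (α * K / 2) * ((2 * f x + α * K)⁻¹ * (2 * D))) x := by
    exact hlin.add ((hlog.sub_const (Real.log (2 + α * K))).const_mul (α * K / 2))
  have hDeq : D = -(2 * K * ((d : ℝ) - 1)) + (α * K / 2) * ((2 * f x + α * K)⁻¹ * (2 * D)) := by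
    have h := hEq.deriv_eq
    rw [hf'.deriv, hg'.deriv] at h
    exact h
  have hfne : f x ≠ 0 := (hpos x hx).ne'
  have hcne : 2 * f x + α * K ≠ 0 := hne x hx
  rw [hf'.deriv]
  field_simp at hDeq ⊢
  have hc2 : 2 * f x + K * α ≠ 0 := by rwa [mul_comm K α]
  have key : D * α / (2 * f x + K * α) * (2 * f x + K * α) = D * α := div_mul_cancel₀ _ hc2
  linear_combination (2 * f x + K * α) / 2 * hDeq + K / 2 * key
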